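/- Let U be a von Neumann regular, left self-injective ring, P a finitely generated projective U-module, and K a submodule of P. Then the closure cl_bnd(K) = {x ∈ P : f(x)=0 for all f ∈ Hom_U(P,U) with K ⊆ ker f} is a finitely generated projective direct summand of P, and equals the supremum in the lattice of finitely generated submodules of P of all finitely generated submodules Q of P contained in K. -/

import Mathlib

section Idem
variable {U : Type} [Ring U]

lemma exists_idem_span_singleton (hreg : ∀ a : U, ∃ x : U, a * x * a = a) (a : U) :
    ∃ e : U, e * e = e ∧ Submodule.span U {a} = Submodule.span U {e} := by
  obtain ⟨x, hx⟩ := hreg a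
  refine ⟨x * a, by rw [show x * a * (x * a) = x * (a * x * a) by noncomm_ring, hx], ?_⟩
  apply le_antisymm <;> rw [Submodule.span_le, Set.singleton_subset_iff, SetLike.mem_coe,
    Submodule.mem_span_singleton]
  · exact ⟨a, by rw [smul_eq_mul, ← mul_assoc, hx]⟩
  · exact ⟨x, by rw [smul_eq_mul]⟩

lemma idem_sup_span (hreg : ∀ a : U, ∃ x : U, a * x * a = a) {e : U} (he : e * e = e) (b : U) :
    ∃ h : U, h * h = h ∧ Submodule.span U {b} ⊔ Submodule.span U {e} = Submodule.span U {h} := by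
  set a := b - b * e with ha
  have hsup : Submodule.span U {b} ⊔ Submodule.span U {e}
      = Submodule.span U {a} ⊔ Submodule.span U {e} := by
    apply le_antisymm <;> refine sup_le ?_ le_sup_right <;>
      rw [Submodule.span_le, Set.singleton_subset_iff, SetLike.mem_coe]
    · have : b = a + b • e := by rw [ha, smul_eq_mul]; noncomm_ring
      rw [this]
      exact Submodule.add_mem _
        (Submodule.mem_sup_left (Submodule.mem_span_singleton_self a))
        (Submodule.mem_sup_right (Submodule.smul_mem _ _ (Submodule.mem_span_singleton_self e)))
    · have : a = b + (-b) • e := by rw [ha, smul_eq_mul]; noncomm_ring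
      rw [this]
      exact Submodule.add_mem _
        (Submodule.mem_sup_left (Submodule.mem_span_singleton_self b))
        (Submodule.mem_sup_right (Submodule.smul_mem _ _ (Submodule.mem_span_singleton_self e)))
  have hae : a * e = 0 := by
    rw [ha, sub_mul, mul_assoc, he, sub_self]
  obtain ⟨f, hf, hspf⟩ := exists_idem_span_singleton hreg a
  have hfUa : f ∈ Submodule.span U {a} := hspf ▸ Submodule.mem_span_singleton_self f
  obtain ⟨u, hu⟩ := Submodule.mem_span_singleton.mp hfUa
  have hfe : f * e = 0 := by
    rw [← hu, smul_eq_mul, mul_assoc, hae, mul_zero]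
  refine ⟨e + f - e * f, ?_, ?_⟩
  · have expand : (e + f - e * f) * (e + f - e * f)
        = e*e + e*f - (e*e)*f + ((f*e)*1 + f*f - (f*e)*f) - (e*(f*e) + e*(f*f) - (e*(f*e))*f) := by
      noncomm_ring
    rw [expand, he, hf, hfe]
    noncomm_ring
  · rw [hsup, hspf]
    apply le_antisymm
    · refine sup_le ?_ ?_ <;> rw [Submodule.span_le, Set.singleton_subset_iff, SetLike.mem_coe,
        Submodule.mem_span_singleton]
      · exact ⟨f, by rw [smul_eq_mul]; rw [show f * (e + f - e * f) = f*e + f*f - (f*e)*f by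
          noncomm_ring, hfe, hf]; noncomm_ring⟩
      · exact ⟨e, by rw [smul_eq_mul]; rw [show e * (e + f - e * f) = e*e + e*f - (e*e)*f by
          noncomm_ring, he]; noncomm_ring⟩
    · rw [Submodule.span_le, Set.singleton_subset_iff, SetLike.mem_coe]
      have : e + f - e * f = (1 - e) • f + (1 : U) • e := by
        rw [smul_eq_mul, smul_eq_mul]; noncomm_ring
      rw [this]
      exact Submodule.add_mem _
        (Submodule.mem_sup_left (Submodule.smul_mem _ _ (Submodule.mem_span_singleton_self f)))
        (Submodule.mem_sup_right (Submodule.smul_mem _ _ (Submodule.mem_span_singleton_self e)))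

lemma fg_ideal_idem (hreg : ∀ a : U, ∃ x : U, a * x * a = a) (I : Submodule U U) (hI : I.FG) :
    ∃ e : U, e * e = e ∧ I = Submodule.span U {e} := by
  obtain ⟨s, rfl⟩ := hI
  classical
  induction s using Finset.induction_on with
  | empty => exact ⟨0, by simp, by rw [Finset.coe_empty, Submodule.span_empty,
      Submodule.span_zero_singleton]⟩
  | @insert b s hb ih =>
      obtain ⟨e, he, hspan⟩ := ih
      obtain ⟨h, hh, hsp2⟩ := idem_sup_span hreg he b
      refine ⟨h, hh, ?_⟩
      rw [Finset.coe_insert, Submodule.span_insert, hspan, hsp2]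
end Idem

section Inj
variable {U : Type} [Ring U]

lemma inj_pi {ι : Type} (h : Module.Injective U U) : Module.Injective U (ι → U) := by
  constructor
  intro X Y _ _ _ _ f hf g
  have H : ∀ i : ι, ∃ hi : Y →ₗ[U] U, ∀ x, hi (f x) = ((LinearMap.proj i).comp g) x :=
    fun i => h.out f hf ((LinearMap.proj i).comp g)
  choose hs hhs using H
  exact ⟨LinearMap.pi hs, fun x => funext fun i => hhs i x⟩

lemma inj_retract {P Q : Type} [AddCommGroup P] [Module U P] [AddCommGroup Q] [Module U Q]
    (s : P →ₗ[U] Q) (r : Q →ₗ[U] P) (hrs : r.comp s = LinearMap.id)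
    (h : Module.Injective U Q) : Module.Injective U P := by
  constructor
  intro X Y _ _ _ _ f hf g
  obtain ⟨h', hh'⟩ := h.out f hf (s.comp g)
  refine ⟨r.comp h', fun x => ?_⟩
  have := LinearMap.congr_fun hrs (g x)
  simp only [LinearMap.comp_apply, hh' x, LinearMap.id_apply] at this ⊢
  exact this

lemma exists_retract (P : Type) [AddCommGroup P] [Module U P] [Module.Finite U P]
    [Module.Projective U P] :
    ∃ (n : ℕ) (s : P →ₗ[U] (Fin n → U)) (r : (Fin n → U) →ₗ[U] P),
      r.comp s = LinearMap.id := by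
  obtain ⟨n, r, hr⟩ := Module.Finite.exists_fin' U P
  obtain ⟨s, hs⟩ := Module.projective_lifting_property r LinearMap.id hr
  exact ⟨n, s, r, hs⟩
end Inj

section Compl
variable {U : Type} [Ring U]

/-- property: every fg submodule has a complement -/
def FgCompl (U : Type) [Ring U] (M : Type) [AddCommGroup M] [Module U M] : Prop :=
  ∀ N : Submodule U M, N.FG → ∃ W : Submodule U M, IsCompl N W

lemma FgCompl.of_equiv {M M' : Type} [AddCommGroup M] [Module U M] [AddCommGroup M'] [Module U M']
    (e : M ≃ₗ[U] M') (h : FgCompl U M) : FgCompl U M' := by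
  intro N hN
  have hN' : (N.comap (e : M →ₗ[U] M')).FG := by
    have : N.comap (e : M →ₗ[U] M') = N.map (e.symm : M' →ₗ[U] M) := by
      rw [Submodule.comap_equiv_eq_map_symm]
    rw [this]
    exact hN.map _
  obtain ⟨W, hW⟩ := h _ hN'
  refine ⟨W.map (e : M →ₗ[U] M'), ?_⟩
  have := (Submodule.orderIsoMapComap e).isCompl hW
  have hNe : Submodule.map (e : M →ₗ[U] M') (N.comap (e : M →ₗ[U] M')) = N :=
    Submodule.map_comap_eq_of_surjective e.surjective N
  have hNe' : (Submodule.orderIsoMapComap e) (N.comap (e : M →ₗ[U] M')) = N := hNe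
  rwa [hNe'] at this
end Compl


section Compl
variable {U : Type} [Ring U]


lemma FgCompl.prod_step {M : Type} [AddCommGroup M] [Module U M]
    (hreg : ∀ a : U, ∃ x : U, a * x * a = a) (h : FgCompl U M) : FgCompl U (M × U) := by
  intro N hN
  set π : (M × U) →ₗ[U] U := LinearMap.snd U M U with hπ
  set I : Submodule U U := N.map π with hI
  obtain ⟨e, he, hIe⟩ := fg_ideal_idem hreg I (hN.map π)
  have heI : e ∈ I := hIe ▸ Submodule.mem_span_singleton_self e
  obtain ⟨n₀, hn₀N, hn₀⟩ := Submodule.mem_map.mp heI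
  -- every element of I is fixed by right multiplication by e
  have hfix : ∀ y ∈ I, y * e = y := by
    intro y hy
    rw [hIe, Submodule.mem_span_singleton] at hy
    obtain ⟨u, rfl⟩ := hy
    rw [smul_eq_mul, mul_assoc, he]
  -- M₀ : the part of N inside M × {0}
  set M₀ : Submodule U M := N.comap (LinearMap.inl U M U) with hM₀
  -- M₀ is finitely generated
  have hM₀fg : M₀.FG := by
    set ρ : (M × U) →ₗ[U] (M × U) := LinearMap.id - LinearMap.smulRight π n₀ with hρ
    have key : (N.map ρ).map (LinearMap.fst U M U) = M₀ := by
      apply le_antisymm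
      · rintro a ⟨y, ⟨x, hxN, rfl⟩, rfl⟩
        have h1 : ρ x ∈ N := by
          simp only [hρ, LinearMap.sub_apply, LinearMap.id_apply, LinearMap.smulRight_apply]
          exact Submodule.sub_mem _ hxN (Submodule.smul_mem _ _ hn₀N)
        have h2 : π (ρ x) = 0 := by
          have hx : π x * e = π x := hfix (π x) (Submodule.mem_map_of_mem hxN)
          simp only [hρ, LinearMap.sub_apply, LinearMap.id_apply, LinearMap.smulRight_apply,
            map_sub, map_smul, hn₀, smul_eq_mul, hx, sub_self]
        have h3 : ρ x = ((ρ x).1, (0 : U)) := by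
          rw [Prod.ext_iff]
          exact ⟨rfl, h2⟩
        show (ρ x).1 ∈ M₀
        rw [hM₀]
        simp only [Submodule.mem_comap, LinearMap.inl_apply]
        rwa [← h3]
      · intro a ha
        rw [hM₀] at ha
        simp only [Submodule.mem_comap, LinearMap.inl_apply] at ha
        refine ⟨(a, 0), ⟨(a, 0), ha, ?_⟩, rfl⟩
        have : π (a, (0:U)) = 0 := rfl
        simp [hρ, this]
    rw [← key]
    exact (hN.map ρ).map _
  obtain ⟨W₀, hW₀⟩ := h M₀ hM₀fg
  refine ⟨W₀.map (LinearMap.inl U M U) ⊔ Submodule.span U {((0 : M), 1 - e)}, ?_⟩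
  constructor
  · -- disjoint
    rw [disjoint_iff, Submodule.eq_bot_iff]
    rintro x ⟨hxN, hxW⟩
    obtain ⟨y, hy, z, hz, rfl⟩ := Submodule.mem_sup.mp hxW
    obtain ⟨w, hw, rfl⟩ := Submodule.mem_map.mp hy
    obtain ⟨u, rfl⟩ := Submodule.mem_span_singleton.mp hz
    have hπx : π (LinearMap.inl U M U w + u • ((0:M), 1 - e)) = u * (1 - e) := by
      simp [hπ]
    have hπI : π (LinearMap.inl U M U w + u • ((0:M), 1 - e)) ∈ I :=
      Submodule.mem_map_of_mem hxN
    have hzero : u * (1 - e) = 0 := by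
      have h1 := hfix _ hπI
      rw [hπx] at h1
      have : u * (1 - e) * e = 0 := by
        rw [mul_assoc, sub_mul, one_mul, he, sub_self, mul_zero]
      rw [this] at h1
      exact h1.symm
    have hx0 : u • ((0:M), 1 - e) = 0 := by
      rw [Prod.smul_mk, smul_zero, smul_eq_mul, hzero]
      rfl
    rw [hx0, add_zero] at hxN ⊢
    have hwM₀ : w ∈ M₀ := by
      rw [hM₀]
      simpa using hxN
    have : w = 0 := by
      have := hW₀.disjoint
      rw [disjoint_iff, Submodule.eq_bot_iff] at this
      exact this w ⟨hwM₀, hw⟩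
    rw [this, map_zero]
  · -- codisjoint
    rw [codisjoint_iff, eq_top_iff]
    rintro x -
    obtain ⟨c₀, hc₀, w₀, hw₀, hcw⟩ := Submodule.mem_sup.mp
      (show x.1 - x.2 • n₀.1 ∈ M₀ ⊔ W₀ by rw [hW₀.sup_eq_top]; trivial)
    have hn₀2 : n₀.2 = e := hn₀
    have hxdec : x = (x.2 • n₀ + (c₀, 0)) + ((w₀, 0) + x.2 • ((0:M), 1 - e)) := by
      rw [Prod.ext_iff]
      constructor
      · simp only [Prod.fst_add, Prod.smul_fst, smul_zero, add_zero]
        rw [add_assoc, hcw]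
        abel
      · simp only [Prod.snd_add, Prod.smul_snd, add_zero, zero_add, smul_eq_mul, hn₀2]
        noncomm_ring
    rw [hxdec]
    refine Submodule.add_mem_sup (Submodule.add_mem _ (Submodule.smul_mem _ _ hn₀N) hc₀) ?_
    refine Submodule.add_mem _ ?_ ?_
    · exact Submodule.mem_sup_left (Submodule.mem_map_of_mem hw₀)
    · exact Submodule.mem_sup_right (Submodule.smul_mem _ _ (Submodule.mem_span_singleton_self _))
end Compl


section FinInd
variable {U : Type} [Ring U]


/-- `Fin (m+1) → U` is linearly equivalent to `(Fin m → U) × U`. -/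
def finSuccLequiv (U : Type) [Ring U] (m : ℕ) :
    (Fin (m + 1) → U) ≃ₗ[U] (Fin m → U) × U :=
  LinearEquiv.ofLinear
    (LinearMap.prod (LinearMap.pi fun i => LinearMap.proj i.castSucc)
      (LinearMap.proj (Fin.last m)))
    (LinearMap.pi fun i => Fin.lastCases (LinearMap.snd U (Fin m → U) U)
      (fun j => (LinearMap.proj j).comp (LinearMap.fst U (Fin m → U) U)) i)
    (by
      apply LinearMap.ext
      intro p
      refine Prod.ext (funext fun i => ?_) ?_
      · simp [LinearMap.pi_apply]
      · simp [LinearMap.pi_apply])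
    (by
      apply LinearMap.ext
      intro x
      funext i
      induction i using Fin.lastCases with
      | last => simp [LinearMap.pi_apply]
      | cast j => simp [LinearMap.pi_apply])

lemma fgCompl_fin (hreg : ∀ a : U, ∃ x : U, a * x * a = a) (m : ℕ) :
    FgCompl U (Fin m → U) := by
  induction m with
  | zero =>
      intro N _
      have hN : N = ⊤ := by
        rw [eq_top_iff]
        intro x _
        have : x = 0 := funext fun i => i.elim0
        rw [this]
        exact N.zero_mem
      exact ⟨⊥, hN ▸ isCompl_top_bot⟩
  | succ m ih =>
      exact FgCompl.of_equiv (finSuccLequiv U m).symm (FgCompl.prod_step hreg ih)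
end FinInd


section SingSep
variable {U : Type} [Ring U]

lemma ring_nonsingular (hreg : ∀ a : U, ∃ x : U, a * x * a = a) (a : U)
    (h : ∀ v : U, v ≠ 0 → ∃ w : U, w * v ≠ 0 ∧ (w * v) * a = 0) : a = 0 := by
  obtain ⟨x, hx⟩ := hreg a
  set t := a * x with htd
  have hta : t * a = a := by rw [htd, hx]
  have htt : t * t = t := by rw [htd, ← mul_assoc, hx]
  by_cases ht0 : t = 0
  · rw [← hta, ht0, zero_mul]
  · obtain ⟨w, hwt, hwa⟩ := h t ht0
    exfalso
    apply hwt
    have h1 : (w * t) * t = 0 := by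
      have h2 : ((w * t) * a) * x = 0 := by rw [hwa, zero_mul]
      rwa [mul_assoc, ← htd] at h2
    rw [mul_assoc, htt] at h1
    exact h1

lemma sep {P : Type} [AddCommGroup P] [Module U P] {n : ℕ}
    (hcomp : FgCompl U (Fin n → U))
    (s : P →ₗ[U] (Fin n → U)) (r : (Fin n → U) →ₗ[U] P) (hrs : r.comp s = LinearMap.id)
    {N : Submodule U P} (hN : N.FG) {x : P} (hx : x ∉ N) :
    ∃ f : P →ₗ[U] U, N ≤ LinearMap.ker f ∧ f x ≠ 0 := by
  have hsinj : Function.Injective s := by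
    intro a b hab
    have h1 := LinearMap.congr_fun hrs a
    have h2 := LinearMap.congr_fun hrs b
    simp only [LinearMap.comp_apply, LinearMap.id_apply] at h1 h2
    rw [← h1, ← h2, hab]
  have hxN' : s x ∉ N.map s := by
    rintro ⟨y, hy, hyx⟩
    exact hx ((hsinj hyx) ▸ hy)
  obtain ⟨W, hW⟩ := hcomp (N.map s) (hN.map s)
  set p := Submodule.linearProjOfIsCompl W (N.map s) hW.symm with hp
  have hps : p (s x) ≠ 0 := by
    intro h0
    exact hxN' ((Submodule.linearProjOfIsCompl_apply_eq_zero_iff hW.symm).mp h0)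
  have hpsc : (↑(p (s x)) : Fin n → U) ≠ 0 := by
    intro h0
    exact hps (Subtype.ext h0)
  obtain ⟨i, hi⟩ : ∃ i, (↑(p (s x)) : Fin n → U) i ≠ 0 := by
    by_contra hcon
    push_neg at hcon
    exact hpsc (funext hcon)
  refine ⟨(LinearMap.proj i).comp ((W.subtype.comp p).comp s), ?_, ?_⟩
  · intro y hy
    rw [LinearMap.mem_ker]
    have : p (s y) = 0 :=
      (Submodule.linearProjOfIsCompl_apply_eq_zero_iff hW.symm).mpr
        (Submodule.mem_map_of_mem hy)
    simp [this]
  · simpa using hi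
end SingSep

/-- The closure `cl_bnd(K)` of a submodule `K` of `P` in the torsion theory cogenerated by
the ring `U`: the intersection of the kernels of all homomorphisms `P → U` vanishing
on `K`, i.e. `{x ∈ P | f x = 0 for all f ∈ Hom_U(P,U) with K ⊆ ker f}`. -/
def bndClosure (U : Type) [Ring U] {P : Type} [AddCommGroup P] [Module U P]
    (K : Submodule U P) : Submodule U P :=
  sInf {N : Submodule U P | ∃ f : P →ₗ[U] U, K ≤ LinearMap.ker f ∧ N = LinearMap.ker f}

/-- let `U` be a von Neumann regular, left self-injective ring, `P` a
finitely generated projective `U`-module, and `K` a submodule of `P`. Then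
`cl_bnd(K)` is a finitely generated projective direct summand of `P`, and it equals the
supremum, in the lattice of finitely generated submodules of `P`, of all finitely
generated submodules `Q` of `P` contained in `K` (i.e. it is the least finitely
generated submodule of `P` containing every finitely generated `Q ≤ K`). -/
theorem bndClosure_fg_projective_direct_summand (U : Type) [Ring U]
    (hreg : ∀ a : U, ∃ x : U, a * x * a = a)
    (hinj : Module.Injective U U)
    (P : Type) [AddCommGroup P] [Module U P] [Module.Finite U P] [Module.Projective U P]
    (K : Submodule U P) :
    (bndClosure U K).FG ∧ Module.Projective U ↥(bndClosure U K) ∧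
      (∃ q : Submodule U P, IsCompl (bndClosure U K) q) ∧
      IsLeast {N : Submodule U P | N.FG ∧
        ∀ Q : Submodule U P, Q.FG → Q ≤ K → Q ≤ N} (bndClosure U K) := by
  classical
  obtain ⟨n, s, r, hrs⟩ := exists_retract (U := U) P
  have hinjP : Module.Injective U P := inj_retract s r hrs (inj_pi hinj)
  have hcomp : FgCompl U (Fin n → U) := fgCompl_fin hreg n
  set C := bndClosure U K with hC
  have hCmem : ∀ x : P, x ∈ C ↔ ∀ f : P →ₗ[U] U, K ≤ LinearMap.ker f → f x = 0 := by
    intro x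
    rw [hC]
    simp only [bndClosure, Submodule.mem_sInf, Set.mem_setOf_eq]
    constructor
    · intro h f hf
      exact h (LinearMap.ker f) ⟨f, hf, rfl⟩
    · rintro h N ⟨f, hf, rfl⟩
      exact h f hf
  have hKC : K ≤ C := fun k hk => (hCmem k).mpr (fun f hf => hf hk)
  have hCker : ∀ f : P →ₗ[U] U, K ≤ LinearMap.ker f → C ≤ LinearMap.ker f := by
    intro f hf
    rw [hC]
    exact sInf_le ⟨f, hf, rfl⟩
  -- Zorn's lemma: a maximal submodule D with C ⊓ D = ⊥
  obtain ⟨D, hD⟩ : ∃ D, Maximal (· ∈ {D : Submodule U P | C ⊓ D = ⊥}) D := by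
    apply zorn_le₀
    intro c hc hchain
    rcases Set.eq_empty_or_nonempty c with rfl | hne
    · exact ⟨⊥, by simp, by simp⟩
    · refine ⟨sSup c, ?_, fun z hz => le_sSup hz⟩
      rw [Set.mem_setOf_eq, Submodule.eq_bot_iff]
      rintro z ⟨hzC, hzsSup⟩
      obtain ⟨p, hpc, hzp⟩ := (Submodule.mem_sSup_of_directed hne hchain.directedOn).mp hzsSup
      have := hc hpc
      rw [Set.mem_setOf_eq, Submodule.eq_bot_iff] at this
      exact this z ⟨hzC, hzp⟩
  have hCD : C ⊓ D = ⊥ := hD.1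
  -- essentiality of C ⊔ D
  have hess : ∀ x : P, x ≠ 0 → ∃ u : U, u • x ∈ C ⊔ D ∧ u • x ≠ 0 := by
    intro x hx
    by_contra hcon
    push_neg at hcon
    have hmem : C ⊓ (D ⊔ Submodule.span U {x}) = ⊥ := by
      rw [Submodule.eq_bot_iff]
      rintro z ⟨hzC, hzD⟩
      obtain ⟨d, hd, y, hy, hzy⟩ := Submodule.mem_sup.mp hzD
      obtain ⟨u, rfl⟩ := Submodule.mem_span_singleton.mp hy
      have hux : u • x ∈ C ⊔ D := by
        have huxz : u • x = z - d := by rw [← hzy]; abel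
        rw [huxz]
        exact Submodule.sub_mem _ (Submodule.mem_sup_left hzC) (Submodule.mem_sup_right hd)
      have h0 := hcon u hux
      rw [h0, add_zero] at hzy
      have hzCD : z ∈ C ⊓ D := ⟨hzC, hzy ▸ hd⟩
      rw [hCD] at hzCD
      exact (Submodule.mem_bot U).mp hzCD
    have hle : D ⊔ Submodule.span U {x} ≤ D := hD.2 hmem le_sup_left
    have hxD : x ∈ D := hle (Submodule.mem_sup_right (Submodule.mem_span_singleton_self x))
    have h1 := hcon 1 (by rw [one_smul]; exact Submodule.mem_sup_right hxD)
    rw [one_smul] at h1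
    exact hx h1
  -- the projection of C ⊔ D onto C, and its extension g : P → P
  set S : Submodule U P := C ⊔ D with hS
  set C' : Submodule U ↥S := C.comap S.subtype with hC'
  set D' : Submodule U ↥S := D.comap S.subtype with hD'
  have hcompl : IsCompl C' D' := by
    constructor
    · rw [disjoint_iff, Submodule.eq_bot_iff]
      rintro x ⟨h1, h2⟩
      have hx : (↑x : P) ∈ C ⊓ D := ⟨h1, h2⟩
      rw [hCD] at hx
      exact Subtype.ext ((Submodule.mem_bot U).mp hx)
    · rw [codisjoint_iff, eq_top_iff]
      rintro z -
      have hz : (↑z : P) ∈ C ⊔ D := z.2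
      obtain ⟨c, hc, d, hd, hcd⟩ := Submodule.mem_sup.mp hz
      refine Submodule.mem_sup.mpr ⟨⟨c, Submodule.mem_sup_left hc⟩, hc, ⟨d, Submodule.mem_sup_right hd⟩, hd, ?_⟩
      exact Subtype.ext hcd
  set pr : ↥S →ₗ[U] P :=
    (S.subtype.comp C'.subtype).comp (Submodule.linearProjOfIsCompl C' D' hcompl) with hpr
  obtain ⟨g, hg⟩ := hinjP.out S.subtype (Submodule.injective_subtype S) pr
  have hgC : ∀ c : P, c ∈ C → g c = c := by
    intro c hc
    have hcS : c ∈ S := Submodule.mem_sup_left hc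
    have hproj := Submodule.linearProjOfIsCompl_apply_left hcompl
      ⟨⟨c, hcS⟩, show (⟨c, hcS⟩ : ↥S) ∈ C' from hc⟩
    calc g c = pr ⟨c, hcS⟩ := hg ⟨c, hcS⟩
      _ = ↑(↑(Submodule.linearProjOfIsCompl C' D' hcompl ⟨c, hcS⟩) : ↥S) := rfl
      _ = c := congrArg (fun y : C' => ((y : ↥S) : P)) hproj
  have hgS : ∀ z : P, z ∈ S → g z ∈ C := by
    intro z hz
    have h2 : g z = pr ⟨z, hz⟩ := hg ⟨z, hz⟩
    rw [h2]
    exact (Submodule.linearProjOfIsCompl C' D' hcompl ⟨z, hz⟩).2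
  -- the key fact: g maps all of P into C
  have hrange : ∀ m : P, g m ∈ C := by
    intro m
    rw [hCmem]
    intro f hKf
    have hCf : C ≤ LinearMap.ker f := hCker f hKf
    have key : ∀ u : U, u * f (g m) = f (g (u • m)) := by
      intro u
      rw [map_smul, map_smul, smul_eq_mul]
    apply ring_nonsingular hreg
    intro v hv
    by_cases hvm : v • m = 0
    · refine ⟨1, by rwa [one_mul], ?_⟩
      rw [one_mul, key v, hvm, map_zero, map_zero]
    · obtain ⟨u, huS, hune⟩ := hess (v • m) hvm
      refine ⟨u, ?_, ?_⟩
      · intro h0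
        exact hune (by rw [smul_smul, h0, zero_smul])
      · rw [key (u * v)]
        rw [smul_smul] at huS
        exact LinearMap.mem_ker.mp (hCf (hgS _ huS))
  have hCrange : LinearMap.range g = C := by
    apply le_antisymm
    · rintro _ ⟨m, rfl⟩
      exact hrange m
    · intro c hc
      exact ⟨c, hgC c hc⟩
  -- C is finitely generated
  have hfg : C.FG := by
    have h1 : (⊤ : Submodule U P).FG := Module.Finite.fg_top
    have h2 := h1.map g
    rwa [Submodule.map_top, hCrange] at h2
  -- C is projective
  have hproj : Module.Projective U ↥C := by
    refine Module.Projective.of_split C.subtype (LinearMap.codRestrict C g hrange) ?_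
    exact LinearMap.ext fun x => Subtype.ext (by simpa using hgC ↑x x.2)
  -- C is a direct summand
  have hcomplC : IsCompl C (LinearMap.ker g) := by
    constructor
    · rw [disjoint_iff, Submodule.eq_bot_iff]
      rintro x ⟨hx1, hx2⟩
      exact (hgC x hx1).symm.trans (LinearMap.mem_ker.mp hx2)
    · rw [codisjoint_iff, eq_top_iff]
      rintro x -
      have h1 : g x ∈ C := hrange x
      have h2 : x - g x ∈ LinearMap.ker g := by
        rw [LinearMap.mem_ker, map_sub, hgC (g x) h1, sub_self]
      exact Submodule.mem_sup.mpr ⟨g x, h1, x - g x, h2, by abel⟩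
  refine ⟨hfg, hproj, ⟨_, hcomplC⟩, ⟨hfg, fun Q _ hQK => hQK.trans hKC⟩, ?_⟩
  rintro N ⟨hNfg, hNall⟩
  have hKN : K ≤ N := by
    intro k hk
    exact hNall (Submodule.span U {k}) (Submodule.fg_span_singleton k)
      ((Submodule.span_singleton_le_iff_mem k K).mpr hk) (Submodule.mem_span_singleton_self k)
  intro x hxC
  by_contra hxN
  obtain ⟨f, hNf, hfx⟩ := sep hcomp s r hrs hNfg hxN
  exact hfx ((hCmem x).mp hxC f (hKN.trans hNf))
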